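/- For all integers n ≥ 0 and i ≥ 1, ā_{2i}(4n + 3) ≡ 0 (mod 4). -/

import Mathlib

open PowerSeries Finset

noncomputable def gb : ℕ → ℕ → PowerSeries ℤ
  | 0, 0 => 1
  | 0, _+1 => 0
  | _+1, 0 => 1
  | n+1, k+1 => gb n (k+1) + X ^ (2*(n-k)) * gb n k

lemma gb_zero_right (n : ℕ) : gb n 0 = 1 := by cases n <;> rfl

lemma gb_formA (n k : ℕ) : gb (n+1) (k+1) = gb n (k+1) + X ^ (2*(n-k)) * gb n k := rfl

lemma gb_eq_zero : ∀ {n k : ℕ}, n < k → gb n k = 0 := by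
  intro n
  induction n with
  | zero => intro k hk; match k, hk with | k+1, _ => rfl
  | succ n ih =>
      intro k hk
      match k, hk with
      | k+1, hk =>
        rw [gb_formA, ih (by omega), ih (by omega), mul_zero, add_zero]

lemma gb_self (n : ℕ) : gb n n = 1 := by
  induction n with
  | zero => rfl
  | succ n ih =>
      rw [gb_formA, gb_eq_zero (by omega), ih, Nat.sub_self, zero_add, mul_one, pow_zero]

lemma gb_one (n : ℕ) : gb n 1 = ∑ j ∈ range n, ((X : PowerSeries ℤ)^2)^j := by
  induction n with
  | zero => simp [gb_eq_zero]
  | succ n ih =>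
      rw [show (1:ℕ) = 0 + 1 from rfl, gb_formA, ih, gb_zero_right, mul_one,
        Finset.sum_range_succ, Nat.sub_zero, ← pow_mul]

lemma gb_formB (n : ℕ) : ∀ k, gb (n+1) (k+1) = X ^ (2*(k+1)) * gb n (k+1) + gb n k := by
  induction n with
  | zero =>
      intro k
      cases k with
      | zero => rw [gb_formA]; simp [gb_eq_zero, gb_zero_right]
      | succ j =>
          rw [gb_formA, gb_eq_zero (show 0 < j+1+1 by omega)]
          simp
  | succ n ih =>
      intro k
      cases k with
      | zero =>
          rw [gb_formA, gb_zero_right]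
          simp only [Nat.zero_add, Nat.sub_zero, mul_one]
          rw [gb_one (n+1)]
          have hg := geom_sum_mul ((X : PowerSeries ℤ)^2) (n+1)
          linear_combination -hg
      | succ j =>
          have hLHS : gb (n+1+1) (j+1+1)
              = (X^(2*(j+2)) * gb n (j+2) + gb n (j+1))
                + X^(2*(n-j)) * (X^(2*(j+1)) * gb n (j+1) + gb n j) := by
            rw [gb_formA (n+1) (j+1), Nat.succ_sub_succ, ih (j+1), ih j]
          have hRHS : X^(2*(j+1+1)) * gb (n+1) (j+1+1) + gb (n+1) (j+1)
              = X^(2*(j+2)) * (gb n (j+2) + X^(2*(n-(j+1))) * gb n (j+1))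
                + (gb n (j+1) + X^(2*(n-j)) * gb n j) := by
            rw [gb_formA n (j+1), gb_formA n j]
          rw [hLHS, hRHS]
          rcases Nat.lt_trichotomy j n with h | h | h
          · have hx : (X:PowerSeries ℤ)^(2*(n-j)) * X^(2*(j+1))
                = X^(2*(j+2)) * X^(2*(n-(j+1))) := by
              rw [← pow_add, ← pow_add]; congr 1; omega
            linear_combination (gb n (j+1)) * hx
          · subst h
            rw [gb_eq_zero (show j < j + 1 by omega), gb_eq_zero (show j < j + 2 by omega)]
            simp
          · rw [gb_eq_zero (show n < j by omega), gb_eq_zero (show n < j + 1 by omega),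
              gb_eq_zero (show n < j + 2 by omega)]
            simp

lemma gb_pascal4 (n k : ℕ) : gb (n+2) (k+2)
    = X^(2*(k+2)) * gb n (k+2) + (1 + X^(2*(n+1))) * gb n (k+1) + X^(2*(n-k)) * gb n k := by
  rw [gb_formB (n+1) (k+1), gb_formA n (k+1), gb_formA n k]
  rcases Nat.lt_or_ge k n with h | h
  · have hx : (X:PowerSeries ℤ)^(2*(k+2)) * X^(2*(n-(k+1))) = X^(2*(n+1)) := by
      rw [← pow_add]; congr 1; omega
    linear_combination gb n (k+1) * hx
  · rcases Nat.eq_or_lt_of_le h with rfl | h'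
    · rw [gb_eq_zero (show n < n + 1 by omega), gb_eq_zero (show n < n + 2 by omega)]
      simp
    · rw [gb_eq_zero (show n < k by omega), gb_eq_zero (show n < k + 1 by omega),
        gb_eq_zero (show n < k + 2 by omega)]
      simp

lemma gb_two_one (n : ℕ) : gb (n+2) 1 = X^2 * gb n 1 + (1 + X^(2*(n+1))) := by
  rw [show (1:ℕ) = 0 + 1 from rfl, gb_formA (n+1) 0, gb_formB n 0, gb_zero_right,
    gb_zero_right, Nat.sub_zero]
  ring

noncomputable def PP (k N : ℕ) : PowerSeries ℤ :=
  ∏ m ∈ Finset.Icc 1 N, (1 - (PowerSeries.X : PowerSeries ℤ) ^ (k * m))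

lemma PP_succ (k N : ℕ) : PP k (N+1) = PP k N * (1 - X ^ (k*(N+1))) :=
  Finset.prod_Icc_succ_top (by omega) _

lemma PP_zero (k : ℕ) : PP k 0 = 1 := by simp [PP]

lemma gb_mul_PP : ∀ (s a b : ℕ), a + b = s → gb (a+b) b * PP 2 a * PP 2 b = PP 2 (a+b) := by
  intro s
  induction s using Nat.strong_induction_on with
  | _ s ih =>
    intro a b hs
    cases b with
    | zero => rw [gb_zero_right, PP_zero]; ring
    | succ k =>
      cases a with
      | zero => simp only [Nat.zero_add]; rw [gb_self, PP_zero]; ring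
      | succ a' =>
        have hdef : gb (a'+1+(k+1)) (k+1) = gb (a'+k+1) (k+1) + X^(2*(a'+1)) * gb (a'+k+1) k := by
          rw [show a'+1+(k+1) = (a'+k+1)+1 by omega, gb_formA,
            show (a'+k+1) - k = a'+1 by omega]
        have IH1 : gb (a'+(k+1)) (k+1) * PP 2 a' * PP 2 (k+1) = PP 2 (a'+(k+1)) :=
          ih (s-1) (by omega) a' (k+1) (by omega)
        have IH2 : gb (a'+1+k) k * PP 2 (a'+1) * PP 2 k = PP 2 (a'+1+k) :=
          ih (s-1) (by omega) (a'+1) k (by omega)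
        rw [show a'+(k+1) = a'+k+1 by omega] at IH1
        rw [show a'+1+k = a'+k+1 by omega] at IH2
        rw [PP_succ 2 a'] at IH2
        rw [PP_succ 2 k] at IH1
        have hgoal : PP 2 (a'+1+(k+1)) = PP 2 (a'+k+1) * (1 - X^(2*(a'+k+2))) := by
          rw [show a'+1+(k+1) = (a'+k+1)+1 by omega, PP_succ,
            show 2*((a'+k+1)+1) = 2*(a'+k+2) by omega]
        rw [hdef, hgoal, PP_succ 2 a', PP_succ 2 k]
        have hQ : (X : PowerSeries ℤ)^(2*(a'+1)) * X^(2*(k+1)) = X^(2*(a'+k+2)) := by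
          rw [← pow_add]; congr 1; omega
        linear_combination (1 - X^(2*(a'+1))) * IH1
          + X^(2*(a'+1)) * (1 - X^(2*(k+1))) * IH2
          + (- PP 2 (a'+k+1)) * hQ

/-- the summand in the finite Jacobi triple product at z = -1 -/
noncomputable def trm (N k : ℕ) : PowerSeries ℤ :=
  PowerSeries.C (R := ℤ) ((-1)^(k+N)) * X ^ (((k:ℤ) - (N:ℤ)).natAbs^2) * gb (2*N) k

lemma trm_eq_zero {N k : ℕ} (h : 2*N < k) : trm N k = 0 := by
  unfold trm; rw [gb_eq_zero h, mul_zero]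

lemma natAbs_pow_eq {x y : ℤ} {c d : ℕ} (h : x^2 + (c:ℤ) = y^2 + (d:ℤ)) :
    x.natAbs^2 + c = y.natAbs^2 + d := by
  have : ((x.natAbs^2 + c : ℕ) : ℤ) = ((y.natAbs^2 + d : ℕ) : ℤ) := by
    push_cast
    rw [sq_abs, sq_abs]
    exact h
  exact_mod_cast this

lemma X_pow_shift {x y : ℤ} {c d : ℕ} (h : x^2 + (c:ℤ) = y^2 + (d:ℤ)) :
    (X : PowerSeries ℤ)^(x.natAbs^2) * X^c = X^(y.natAbs^2) * X^d := by
  rw [← pow_add, ← pow_add]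
  exact congrArg _ (natAbs_pow_eq h)

lemma sum_shift1 {M : Type*} [AddCommGroup M] (g : ℕ → M) (m : ℕ) :
    ∑ j ∈ range m, g (j+1) = (∑ j ∈ range m, g j) + g m - g 0 := by
  have h1 := Finset.sum_range_succ' g m
  rw [Finset.sum_range_succ g m] at h1
  exact eq_sub_of_add_eq h1.symm

lemma sum_shift2 {M : Type*} [AddCommGroup M] (g : ℕ → M) (m : ℕ) :
    ∑ j ∈ range m, g (j+2) = (∑ j ∈ range m, g j) + g m + g (m+1) - g 0 - g 1 := by
  have h := sum_shift1 (fun j => g (j+1)) m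
  rw [sum_shift1 g m] at h
  rw [h]
  abel

lemma trm_step (N : ℕ) (j : ℕ) :
    trm (N+1) (j+2) = trm N (j+1) * (1 + X^(2*(2*N+1)))
      - trm N j * X^(2*N+1) - trm N (j+2) * X^(2*N+1) := by
  unfold trm
  have hp : gb (2*(N+1)) (j+2) = X^(2*(j+2)) * gb (2*N) (j+2)
      + (1 + X^(2*(2*N+1))) * gb (2*N) (j+1) + X^(2*(2*N-j)) * gb (2*N) j := by
    rw [show 2*(N+1) = 2*N+2 by omega]
    exact gb_pascal4 (2*N) j
  rw [hp]
  have hcast : ((j+2 : ℕ) : ℤ) - ((N+1:ℕ) : ℤ) = ((j+1:ℕ):ℤ) - (N:ℤ) := by push_cast; ring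
  have hs0 : ((-1:ℤ))^(j+2+(N+1)) = (-1:ℤ)^(j+1+N) := by
    rw [show j+2+(N+1) = (j+1+N)+2 by omega, pow_add]; norm_num
  rw [hcast, hs0]
  have h1 : (PowerSeries.C (R := ℤ) ((-1:ℤ)^(j+1+N))) * X ^ ((((j+1:ℕ):ℤ) - (N:ℤ)).natAbs^2)
      * (X^(2*(j+2)) * gb (2*N) (j+2))
      = -(PowerSeries.C (R := ℤ) ((-1:ℤ)^(j+2+N)) * X ^ ((((j+2:ℕ):ℤ) - (N:ℤ)).natAbs^2)
          * gb (2*N) (j+2)) * X^(2*N+1) := by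
    have hX := X_pow_shift (x := ((j+1:ℕ):ℤ) - (N:ℤ)) (y := ((j+2:ℕ):ℤ) - (N:ℤ))
      (c := 2*(j+2)) (d := 2*N+1) (by push_cast; ring)
    have hsgn : ((-1:ℤ))^(j+2+N) = -(-1:ℤ)^(j+1+N) := by
      rw [show j+2+N = (j+1+N)+1 by omega, pow_succ]; ring
    rw [hsgn, map_neg]
    linear_combination (PowerSeries.C (R := ℤ) ((-1:ℤ)^(j+1+N)) * gb (2*N) (j+2)) * hX
  have h3 : (PowerSeries.C (R := ℤ) ((-1:ℤ)^(j+1+N))) * X ^ ((((j+1:ℕ):ℤ) - (N:ℤ)).natAbs^2)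
      * (X^(2*(2*N-j)) * gb (2*N) j)
      = -(PowerSeries.C (R := ℤ) ((-1:ℤ)^(j+N)) * X ^ ((((j:ℕ):ℤ) - (N:ℤ)).natAbs^2)
          * gb (2*N) j) * X^(2*N+1) := by
    rcases le_or_gt j (2*N) with hj | hj
    · have hX := X_pow_shift (x := ((j+1:ℕ):ℤ) - (N:ℤ)) (y := ((j:ℕ):ℤ) - (N:ℤ))
        (c := 2*(2*N-j)) (d := 2*N+1) (by
          have : ((2*(2*N-j) : ℕ) : ℤ) = 2*(2*(N:ℤ) - (j:ℤ)) := by push_cast [hj]; ring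
          rw [this]; push_cast; ring)
      have hsgn : ((-1:ℤ))^(j+1+N) = -(-1:ℤ)^(j+N) := by
        rw [show j+1+N = (j+N)+1 by omega, pow_succ]; ring
      rw [hsgn, map_neg]
      linear_combination (-(PowerSeries.C (R := ℤ) ((-1:ℤ)^(j+N)) * gb (2*N) j)) * hX
    · rw [gb_eq_zero hj]
      ring
  linear_combination h1 + h3

noncomputable def AP (N : ℕ) : PowerSeries ℤ :=
  ∏ m ∈ Finset.Icc 1 N, (1 - (PowerSeries.X : PowerSeries ℤ) ^ (2*m-1))

lemma AP_succ (N : ℕ) : AP (N+1) = AP N * (1 - X^(2*N+1)) := by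
  unfold AP
  rw [Finset.prod_Icc_succ_top (by omega),
    show 2*(N+1)-1 = 2*N+1 by omega]

lemma jtp (N : ℕ) : AP N ^ 2 = ∑ k ∈ range (2*N+1), trm N k := by
  induction N with
  | zero =>
      have h1 : AP 0 = 1 := by simp [AP]
      have h2 : trm 0 0 = 1 := by
        unfold trm
        rw [gb_zero_right]
        norm_num
      rw [h1]
      simp only [Nat.mul_zero, Nat.zero_add, Finset.sum_range_one, h2]
      norm_num
  | succ N ih =>
      rw [AP_succ, mul_pow, ih]
      have e1 : 2*(N+1)+1 = (2*N+2)+1 := by omega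
      conv_rhs => rw [e1, Finset.sum_range_succ', show 2*N+2 = (2*N+1)+1 by omega,
        Finset.sum_range_succ']
      have e2 : ∑ k ∈ range (2*N+1), trm (N+1) (k+1+1)
          = ∑ k ∈ range (2*N+1), (trm N (k+1) * (1 + X^(2*(2*N+1)))
            - trm N k * X^(2*N+1) - trm N (k+2) * X^(2*N+1)) := by
        apply Finset.sum_congr rfl
        intro k _
        exact trm_step N k
      rw [e2]
      rw [Finset.sum_sub_distrib, Finset.sum_sub_distrib, ← Finset.sum_mul, ← Finset.sum_mul,
        ← Finset.sum_mul]
      rw [sum_shift1 (trm N) (2*N+1), sum_shift2 (trm N) (2*N+1)]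
      rw [trm_eq_zero (show 2*N < 2*N+1 by omega), trm_eq_zero (show 2*N < 2*N+1+1 by omega)]
      -- correction identity
      have hcor : trm (N+1) 0 + trm (N+1) 1 + (trm N 0 + trm N 1) * X^(2*N+1)
          = trm N 0 * (1 + X^(2*(2*N+1))) := by
        unfold trm
        have hgb1 : gb (2*(N+1)) 1 = X^2 * gb (2*N) 1 + (1 + X^(2*(2*N+1))) := by
          rw [show 2*(N+1) = 2*N+2 by omega]
          exact gb_two_one (2*N)
        rw [hgb1, gb_zero_right, gb_zero_right]
        have hs1 : ((-1:ℤ))^(0+(N+1)) = -(-1:ℤ)^(0+N) := by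
          rw [show 0+(N+1) = (0+N)+1 by omega, pow_succ]; ring
        have hs2 : ((-1:ℤ))^(1+(N+1)) = (-1:ℤ)^(0+N) := by
          rw [show 1+(N+1) = (0+N)+2 by omega, pow_add]; norm_num
        have hs3 : ((-1:ℤ))^(1+N) = -(-1:ℤ)^(0+N) := by
          rw [show 1+N = (0+N)+1 by omega, pow_succ]; ring
        rw [hs1, hs2, hs3, map_neg]
        have hX1 : (X : PowerSeries ℤ)^((((0:ℕ):ℤ) - ((N+1:ℕ):ℤ)).natAbs^2) * X^0
            = X^((((0:ℕ):ℤ) - ((N:ℕ):ℤ)).natAbs^2) * X^(2*N+1) := by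
          apply X_pow_shift
          push_cast
          ring
        have hX2 : (X : PowerSeries ℤ)^((((1:ℕ):ℤ) - ((N:ℕ):ℤ)).natAbs^2) * X^(2*N+1)
            = X^((((0:ℕ):ℤ) - ((N:ℕ):ℤ)).natAbs^2) * X^2 := by
          apply X_pow_shift
          push_cast
          ring
        have hcast : ((1:ℕ):ℤ) - ((N+1:ℕ):ℤ) = ((0:ℕ):ℤ) - ((N:ℕ):ℤ) := by push_cast; ring
        rw [hcast]
        linear_combination (- PowerSeries.C (R := ℤ) ((-1:ℤ)^(0+N))) * hX1
          + (- PowerSeries.C (R := ℤ) ((-1:ℤ)^(0+N)) * gb (2*N) 1) * hX2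
      linear_combination -hcor

/-- `fk k` is the infinite product `∏_{n ≥ 1} (1 - q^{k n})` in `ℤ[[q]]`, defined
coefficientwise via stable partial products. -/
noncomputable def fk (k : ℕ) : PowerSeries ℤ :=
  PowerSeries.mk fun n =>
    PowerSeries.coeff (R := ℤ) n
      (∏ m ∈ Finset.Icc 1 (n + 1), (1 - (PowerSeries.X : PowerSeries ℤ) ^ (k * m)))

lemma coeff_PP_stable {k n : ℕ} {N M : ℕ} (hn : n < k*(N+1)) (hNM : N ≤ M) :
    (coeff (R := ℤ) n) (PP k M) = (coeff (R := ℤ) n) (PP k N) := by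
  induction M, hNM using Nat.le_induction with
  | base => rfl
  | succ M hM ih =>
      rw [← ih, PP_succ, mul_one_sub, map_sub, PowerSeries.coeff_mul_X_pow']
      rw [if_neg (by nlinarith), sub_zero]

lemma coeff_fk {k n N : ℕ} (hk : 1 ≤ k) (hn : n < k*(N+1)) :
    (coeff (R := ℤ) n) (fk k) = (coeff (R := ℤ) n) (PP k N) := by
  have h1 : (coeff (R := ℤ) n) (fk k) = (coeff (R := ℤ) n) (PP k (n+1)) := by
    simp [fk, PP, PowerSeries.coeff_mk]
  rcases le_or_gt N (n+1) with h | h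
  · rw [h1, coeff_PP_stable hn h]
  · rw [h1, ← coeff_PP_stable (show n < k*(n+1+1) by nlinarith) h.le]

section Congr
variable {R : Type*} [CommRing R]

lemma coeff_mul_congr {F F' G G' : PowerSeries R} {n : ℕ}
    (hF : ∀ j ≤ n, coeff (R := R) j F = coeff (R := R) j F') (hG : ∀ j ≤ n, coeff (R := R) j G = coeff (R := R) j G') :
    ∀ j ≤ n, coeff (R := R) j (F * G) = coeff (R := R) j (F' * G') := by
  intro j hj
  rw [PowerSeries.coeff_mul, PowerSeries.coeff_mul]
  apply Finset.sum_congr rfl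
  intro p hp
  rw [Finset.HasAntidiagonal.mem_antidiagonal] at hp
  rw [hF p.1 (by omega), hG p.2 (by omega)]

lemma coeff_pow_congr {F F' : PowerSeries R} {n : ℕ}
    (hF : ∀ j ≤ n, coeff (R := R) j F = coeff (R := R) j F') (e : ℕ) :
    ∀ j ≤ n, coeff (R := R) j (F ^ e) = coeff (R := R) j (F' ^ e) := by
  induction e with
  | zero => simp
  | succ e ih =>
      intro j hj
      rw [pow_succ, pow_succ]
      exact coeff_mul_congr ih hF j hj

lemma coeff_cancel {F G H : PowerSeries R} {n : ℕ} (hH : constantCoeff (R := R) H = 1)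
    (h : ∀ j ≤ n, coeff (R := R) j (F * H) = coeff (R := R) j (G * H)) :
    ∀ j ≤ n, coeff (R := R) j F = coeff (R := R) j G := by
  intro j hj
  induction j using Nat.strong_induction_on with
  | _ j ih =>
    have hj' := h j hj
    rw [PowerSeries.coeff_mul, PowerSeries.coeff_mul] at hj'
    have hmem : (j, 0) ∈ Finset.HasAntidiagonal.antidiagonal j := by simp
    rw [← Finset.add_sum_erase _ _ hmem, ← Finset.add_sum_erase _ _ hmem] at hj'
    have heq : ∑ p ∈ (Finset.HasAntidiagonal.antidiagonal j).erase (j,0), coeff (R := R) p.1 F * coeff (R := R) p.2 H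
        = ∑ p ∈ (Finset.HasAntidiagonal.antidiagonal j).erase (j,0), coeff (R := R) p.1 G * coeff (R := R) p.2 H := by
      apply Finset.sum_congr rfl
      intro p hp
      have hp' := Finset.mem_of_mem_erase hp
      have hne := Finset.ne_of_mem_erase hp
      rw [Finset.HasAntidiagonal.mem_antidiagonal] at hp'
      have h1 : p.1 < j := by
        rcases Nat.lt_or_ge p.1 j with h' | h'
        · exact h'
        · exfalso; apply hne
          exact Prod.ext (by omega) (by omega)
      rw [ih p.1 h1 (by omega)]
    rw [heq] at hj'
    have h2 := add_right_cancel hj'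
    simpa [PowerSeries.coeff_zero_eq_constantCoeff, hH] using h2
end Congr

lemma PP_const {k N : ℕ} (hk : 1 ≤ k) : constantCoeff (R := ℤ) (PP k N) = 1 := by
  unfold PP
  rw [map_prod]
  apply Finset.prod_eq_one
  intro m hm
  rw [Finset.mem_Icc] at hm
  rw [map_sub, map_one, ← PowerSeries.coeff_zero_eq_constantCoeff_apply,
    PowerSeries.coeff_X_pow, if_neg (by nlinarith), sub_zero]

lemma claimStar {N k j : ℕ} (hk : k ≤ 2*N)
    (hj : j ≤ 2*(N - (((k:ℤ) - (N:ℤ)).natAbs)) + 1) :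
    coeff (R := ℤ) j (gb (2*N) k * (PP 2 N * PP 2 N)) = coeff (R := ℤ) j (PP 2 N) := by
  set d : ℕ := ((k:ℤ) - (N:ℤ)).natAbs with hd
  have hdN : d ≤ N := by
    rw [hd]
    omega
  have hmin : N - d ≤ k ∧ N - d ≤ 2*N - k := by
    constructor <;> omega
  set M : ℕ := 2*(N-d) + 1 with hM
  have key : ∀ i ≤ M, coeff (R := ℤ) i (gb (2*N) k * (PP 2 N * PP 2 N) * (PP 2 (2*N-k) * PP 2 k))
      = coeff (R := ℤ) i (PP 2 N * (PP 2 (2*N-k) * PP 2 k)) := by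
    have hgb : gb (2*N) k * PP 2 (2*N-k) * PP 2 k = PP 2 (2*N) := by
      have := gb_mul_PP ((2*N-k)+k) (2*N-k) k rfl
      rw [show (2*N-k)+k = 2*N by omega] at this
      exact this
    have hL : gb (2*N) k * (PP 2 N * PP 2 N) * (PP 2 (2*N-k) * PP 2 k)
        = PP 2 (2*N) * (PP 2 N * PP 2 N) := by
      rw [← hgb]; ring
    rw [hL]
    -- both sides agree with fk2^3 up to degree M
    have hfk : ∀ (a : ℕ), N - d ≤ a → ∀ i ≤ M, coeff (R := ℤ) i (PP 2 a) = coeff (R := ℤ) i (fk 2) := by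
      intro a ha i hi
      exact (coeff_fk (by omega) (by omega)).symm
    intro i hi
    have h1 : coeff (R := ℤ) i (PP 2 (2*N) * (PP 2 N * PP 2 N)) = coeff (R := ℤ) i (fk 2 * (fk 2 * fk 2)) :=
      coeff_mul_congr (hfk (2*N) (by omega)) (coeff_mul_congr (hfk N (by omega)) (hfk N (by omega))) i hi
    have h2 : coeff (R := ℤ) i (PP 2 N * (PP 2 (2*N-k) * PP 2 k)) = coeff (R := ℤ) i (fk 2 * (fk 2 * fk 2)) :=
      coeff_mul_congr (hfk N (by omega))
        (coeff_mul_congr (hfk (2*N-k) (by omega)) (hfk k (by omega))) i hi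
    rw [h1, h2]
  have hconst : constantCoeff (R := ℤ) (PP 2 (2*N-k) * PP 2 k) = 1 := by
    rw [map_mul, PP_const (by omega), PP_const (by omega), mul_one]
  exact coeff_cancel hconst key j hj

/-- θ-function coefficients: Θ = 1 + 2∑_{k≥1} (-1)^k q^{k²} -/
noncomputable def theta : PowerSeries ℤ :=
  PowerSeries.mk fun m =>
    if m = 0 then 1 else if Nat.sqrt m * Nat.sqrt m = m then 2 * (-1)^(Nat.sqrt m) else 0

lemma PP_split : ∀ N, PP 1 (2*N) = AP N * PP 2 N := by
  intro N
  induction N with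
  | zero => simp [PP, AP]
  | succ N ih =>
      have h1 : PP 1 (2*(N+1)) = PP 1 (2*N) * (1 - X^(2*N+1)) * (1 - X^(2*N+2)) := by
        rw [show 2*(N+1) = (2*N+1)+1 by omega, PP_succ, PP_succ]
        rw [show 1*(2*N+1) = 2*N+1 by omega, show 1*((2*N+1)+1) = 2*N+2 by omega]
      rw [h1, ih, AP_succ, PP_succ, show 2*(N+1) = 2*N+2 by omega]
      ring

lemma neg_one_pow_sub_eq {s N : ℕ} (hs : s ≤ 2*N) : ((-1:ℤ))^(2*N - s) = (-1)^s := by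
  rcases Nat.even_or_odd s with ⟨t, ht⟩ | ⟨t, ht⟩
  · rw [Even.neg_one_pow ⟨N - t, by omega⟩, Even.neg_one_pow ⟨t, by omega⟩]
  · rw [Odd.neg_one_pow ⟨N - t - 1, by omega⟩, Odd.neg_one_pow ⟨t, by omega⟩]

lemma coeff_theta_trunc {n N : ℕ} (hN : n < N) :
    ∀ j ≤ n, coeff (R := ℤ) j theta
      = coeff (R := ℤ) j (∑ k ∈ range (2*N+1),
          PowerSeries.C (R := ℤ) ((-1)^(k+N)) * X ^ (((k:ℤ) - (N:ℤ)).natAbs^2)) := by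
  intro j hj
  rw [map_sum]
  have hterm : ∀ k, coeff (R := ℤ) j (PowerSeries.C (R := ℤ) ((-1:ℤ)^(k+N)) * X ^ (((k:ℤ) - (N:ℤ)).natAbs^2))
      = if (((k:ℤ) - (N:ℤ)).natAbs^2) = j then (-1:ℤ)^(k+N) else 0 := by
    intro k
    rw [PowerSeries.coeff_C_mul, PowerSeries.coeff_X_pow]
    by_cases h : j = (((k:ℤ) - (N:ℤ)).natAbs^2)
    · rw [if_pos h, if_pos h.symm, mul_one]
    · rw [if_neg h, if_neg (fun hh => h hh.symm), mul_zero]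
  simp only [hterm]
  by_cases hj0 : j = 0
  · subst hj0
    rw [Finset.sum_eq_single_of_mem N (by simp; omega)]
    · have hE : ((((N:ℕ):ℤ) - (N:ℤ)).natAbs^2) = 0 := by simp
      rw [if_pos hE, theta, PowerSeries.coeff_mk, if_pos rfl]
      rw [show N + N = 2*N by omega, pow_mul]
      norm_num
    · intro k _ hk
      rw [if_neg]
      intro hE
      apply hk
      have : ((k:ℤ) - (N:ℤ)).natAbs = 0 := by
        nlinarith [Nat.zero_le (((k:ℤ) - (N:ℤ)).natAbs)]
      omega
  · by_cases hsq : Nat.sqrt j * Nat.sqrt j = j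
    · set s := Nat.sqrt j with hs
      have hs1 : 1 ≤ s := by
        rcases Nat.eq_zero_or_pos s with h | h
        · exfalso; apply hj0; rw [← hsq, h]
        · exact h
      have hsn : s ≤ n := by nlinarith [hj]
      have hsN : s ≤ N := by nlinarith
      rw [Finset.sum_eq_add_of_mem (N - s) (N + s)
        (by simp; omega) (by simp; omega) (by omega)]
      · have hE1 : ((((N-s:ℕ):ℤ) - (N:ℤ)).natAbs^2) = j := by
          have : (((N-s:ℕ):ℤ) - (N:ℤ)).natAbs = s := by omega
          rw [this, ← hsq]; ring
        have hE2 : ((((N+s:ℕ):ℤ) - (N:ℤ)).natAbs^2) = j := by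
          have : (((N+s:ℕ):ℤ) - (N:ℤ)).natAbs = s := by omega
          rw [this, ← hsq]; ring
        rw [if_pos hE1, if_pos hE2, theta, PowerSeries.coeff_mk, if_neg hj0, if_pos hsq]
        have hp1 : ((-1:ℤ))^(N - s + N) = (-1)^s := by
          rw [show N - s + N = 2*N - s by omega]
          exact neg_one_pow_sub_eq (by omega)
        have hp2 : ((-1:ℤ))^(N + s + N) = (-1)^s := by
          rw [show N + s + N = 2*N + s by omega, pow_add, pow_mul]
          norm_num
        rw [hp1, hp2]
        ring
      · intro k hk hkne
        rw [if_neg]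
        intro hE
        have habs : ((k:ℤ) - (N:ℤ)).natAbs * ((k:ℤ) - (N:ℤ)).natAbs = j := by
          nlinarith [hE]
        have : Nat.sqrt j = ((k:ℤ) - (N:ℤ)).natAbs := by
          rw [← habs, Nat.sqrt_eq]
        rcases hkne with ⟨h1, h2⟩
        -- from this : Nat.sqrt j = natAbs, and hsq : s*s = j, get natAbs = s, contradiction
        rw [← hs] at this
        omega
    · rw [theta, PowerSeries.coeff_mk, if_neg hj0, if_neg hsq]
      symm
      apply Finset.sum_eq_zero
      intro k _
      rw [if_neg]
      intro hE
      have habs : ((k:ℤ) - (N:ℤ)).natAbs * ((k:ℤ) - (N:ℤ)).natAbs = j := by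
        nlinarith [hE]
      have : Nat.sqrt j = ((k:ℤ) - (N:ℤ)).natAbs := by
        rw [← habs, Nat.sqrt_eq]
      rw [this] at hsq
      exact hsq habs

theorem gauss : fk 1 ^ 2 = fk 2 * theta := by
  ext n
  set N := n + 1 with hN
  -- LHS: truncate
  have hL1 : coeff (R := ℤ) n (fk 1 ^ 2) = coeff (R := ℤ) n ((PP 1 (2*N)) ^ 2) :=
    coeff_pow_congr (fun j hj => coeff_fk (by omega) (by omega)) 2 n le_rfl
  have hL2 : (PP 1 (2*N))^2 = (∑ k ∈ range (2*N+1), trm N k) * (PP 2 N * PP 2 N) := by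
    rw [PP_split, mul_pow, jtp]
    ring
  -- RHS: truncate
  have hR1 : coeff (R := ℤ) n (fk 2 * theta)
      = coeff (R := ℤ) n ((∑ k ∈ range (2*N+1),
          PowerSeries.C (R := ℤ) ((-1)^(k+N)) * X ^ (((k:ℤ) - (N:ℤ)).natAbs^2)) * PP 2 N) := by
    rw [mul_comm (fk 2) theta]
    exact coeff_mul_congr (coeff_theta_trunc (by omega)) (fun j hj => coeff_fk (by omega) (by omega)) n le_rfl
  rw [hL1, hL2, hR1, Finset.sum_mul, Finset.sum_mul, map_sum, map_sum]
  apply Finset.sum_congr rfl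
  intro k hk
  rw [Finset.mem_range] at hk
  -- per-term
  unfold trm
  set E : ℕ := ((k:ℤ) - (N:ℤ)).natAbs^2 with hE
  have harr1 : PowerSeries.C (R := ℤ) ((-1:ℤ)^(k+N)) * X ^ E * gb (2*N) k * (PP 2 N * PP 2 N)
      = (gb (2*N) k * (PP 2 N * PP 2 N)) * X ^ E * PowerSeries.C (R := ℤ) ((-1:ℤ)^(k+N)) := by ring
  have harr2 : PowerSeries.C (R := ℤ) ((-1:ℤ)^(k+N)) * X ^ E * PP 2 N
      = PP 2 N * X ^ E * PowerSeries.C (R := ℤ) ((-1:ℤ)^(k+N)) := by ring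
  rw [harr1, harr2, PowerSeries.coeff_mul_C, PowerSeries.coeff_mul_C,
    PowerSeries.coeff_mul_X_pow', PowerSeries.coeff_mul_X_pow']
  split_ifs with hle
  · -- need claimStar at n - E
    have hd : ((k:ℤ) - (N:ℤ)).natAbs ≤ N := by omega
    have hwin : n - E ≤ 2*(N - (((k:ℤ) - (N:ℤ)).natAbs)) + 1 := by
      set d := ((k:ℤ) - (N:ℤ)).natAbs with hdd
      have hE' : E = d^2 := rfl
      have hc1 : (E:ℤ) = (d:ℤ)^2 := by exact_mod_cast congrArg (Nat.cast (R := ℤ)) hE'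
      have hc2 : (N:ℤ) = (n:ℤ) + 1 := by exact_mod_cast congrArg (Nat.cast (R := ℤ)) hN
      zify [hle, hd]
      nlinarith [sq_nonneg ((d:ℤ) - 1)]
    rw [claimStar (by omega) hwin]
  · rfl

section Part3

def Odd0 {R : Type*} [CommRing R] (F : PowerSeries R) : Prop :=
  ∀ m, m % 2 = 1 → coeff (R := R) m F = 0

variable {R S : Type*} [CommRing R] [CommRing S]

lemma Odd0_one : Odd0 (1 : PowerSeries R) := by
  intro m hm
  rw [PowerSeries.coeff_one, if_neg (by omega)]

lemma Odd0_mul {F G : PowerSeries R} (hF : Odd0 F) (hG : Odd0 G) : Odd0 (F * G) := by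
  intro m hm
  rw [PowerSeries.coeff_mul]
  apply Finset.sum_eq_zero
  intro p hp
  rw [Finset.HasAntidiagonal.mem_antidiagonal] at hp
  rcases Nat.even_or_odd p.1 with ⟨t, ht⟩ | ⟨t, ht⟩
  · rw [hG p.2 (by omega), mul_zero]
  · rw [hF p.1 (by omega), zero_mul]

lemma Odd0_pow {F : PowerSeries R} (hF : Odd0 F) (e : ℕ) : Odd0 (F ^ e) := by
  induction e with
  | zero => exact Odd0_one
  | succ e ih => rw [pow_succ]; exact Odd0_mul ih hF

lemma Odd0_sub {F G : PowerSeries R} (hF : Odd0 F) (hG : Odd0 G) : Odd0 (F - G) := by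
  intro m hm
  rw [map_sub, hF m hm, hG m hm, sub_zero]

lemma Odd0_map (f : R →+* S) {F : PowerSeries R} (hF : Odd0 F) : Odd0 (PowerSeries.map f F) := by
  intro m hm
  rw [PowerSeries.coeff_map, hF m hm, map_zero]

lemma Odd0_inv {F G : PowerSeries R} (hF : Odd0 F) (h : F * G = 1) : Odd0 G := by
  intro m hm
  induction m using Nat.strong_induction_on with
  | _ m ih =>
    have h1 : coeff (R := R) m (F * G) = 0 := by
      rw [h, PowerSeries.coeff_one, if_neg (by omega)]
    rw [PowerSeries.coeff_mul] at h1
    rw [Finset.sum_eq_single (0, m)] at h1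
    · have hc : coeff (R := R) 0 F * constantCoeff (R := R) G = 1 := by
        have := congrArg (constantCoeff (R := R)) h
        rw [map_mul, map_one] at this
        rw [PowerSeries.coeff_zero_eq_constantCoeff]
        exact this
      have := congrArg (fun x => constantCoeff (R := R) G * x) h1
      simp only [mul_zero] at this
      calc coeff (R := R) m G = (coeff (R := R) 0 F * constantCoeff (R := R) G) * coeff (R := R) m G := by rw [hc, one_mul]
        _ = constantCoeff (R := R) G * (coeff (R := R) 0 F * coeff (R := R) m G) := by ring
        _ = 0 := this
    · intro p hp hne
      rw [Finset.HasAntidiagonal.mem_antidiagonal] at hp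
      rcases Nat.even_or_odd p.1 with he | he
      · have h2 : p.2 % 2 = 1 := by
          rcases he with ⟨t, ht⟩
          omega
        rcases Nat.eq_zero_or_pos p.1 with h0 | h0
        · exfalso; apply hne; rw [Prod.ext_iff]; omega
        · rw [ih p.2 (by omega) h2, mul_zero]
      · rcases he with ⟨t, ht⟩
        rw [hF p.1 (by omega), zero_mul]
    · intro hmem
      exfalso
      apply hmem
      simp

lemma Odd0_PP (t N : ℕ) : Odd0 (PP (2*t) N) := by
  induction N with
  | zero => rw [PP_zero]; exact Odd0_one
  | succ N ih =>
      rw [PP_succ]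
      intro m hm
      rw [mul_one_sub, map_sub, PowerSeries.coeff_mul_X_pow']
      split_ifs with h
      · have he : 2*t*(N+1) = 2*(t*(N+1)) := by ring
        rw [ih m hm, ih (m - 2*t*(N+1)) (by omega), sub_zero]
      · rw [ih m hm, sub_zero]

lemma Odd0_fk2 : Odd0 (fk 2) := by
  intro m hm
  rw [coeff_fk (k := 2) (N := m) (by omega) (by omega)]
  exact Odd0_PP 1 m m hm

lemma Odd0_fk4 : Odd0 (fk 4) := by
  intro m hm
  rw [coeff_fk (k := 4) (N := m) (by omega) (by omega)]
  exact Odd0_PP 2 m m hm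

lemma pmap_map (f : R →+* S) {T : Type*} [CommRing T] (g : S →+* T) (F : PowerSeries R) :
    PowerSeries.map g (PowerSeries.map f F) = PowerSeries.map (g.comp f) F := by
  ext m
  simp [PowerSeries.coeff_map]

-- Frobenius mod 2
lemma sq_factor_two (e : ℕ) : ((1 : PowerSeries (ZMod 2)) - X^e)^2 = 1 - X^(2*e) := by
  have h2 : (2 : PowerSeries (ZMod 2)) = 0 := by
    rw [← map_ofNat (PowerSeries.C (R := (ZMod 2))) 2, show (2 : ZMod 2) = 0 from rfl, map_zero]
  linear_combination ((X : PowerSeries (ZMod 2))^e * X^e - X^e) * h2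

lemma map2_PP_sq (N : ℕ) :
    (PowerSeries.map (Int.castRingHom (ZMod 2)) (PP 2 N))^2
      = PowerSeries.map (Int.castRingHom (ZMod 2)) (PP 4 N) := by
  unfold PP
  rw [map_prod, map_prod, ← Finset.prod_pow]
  apply Finset.prod_congr rfl
  intro m hm
  rw [map_sub, map_one, map_pow, PowerSeries.map_X, map_sub, map_one, map_pow,
    PowerSeries.map_X, sq_factor_two, show 2*(2*m) = 4*m by ring]

lemma frob2 : (PowerSeries.map (Int.castRingHom (ZMod 2)) (fk 2))^2
    = PowerSeries.map (Int.castRingHom (ZMod 2)) (fk 4) := by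
  ext m
  rw [← map_pow, PowerSeries.coeff_map, PowerSeries.coeff_map]
  have h1 : coeff (R := ℤ) m (fk 2 ^ 2) = coeff (R := ℤ) m ((PP 2 m)^2) :=
    coeff_pow_congr (fun j hj => coeff_fk (by omega) (by omega)) 2 m le_rfl
  have h2 : coeff (R := ℤ) m (fk 4) = coeff (R := ℤ) m (PP 4 m) := coeff_fk (by omega) (by omega)
  rw [h1, h2]
  have h3 := congrArg (coeff (R := (ZMod 2)) m) (map2_PP_sq m)
  rw [← map_pow, PowerSeries.coeff_map, PowerSeries.coeff_map] at h3
  exact h3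

-- theta decomposition
noncomputable def Tser : PowerSeries ℤ :=
  PowerSeries.mk fun m =>
    if m = 0 then 0 else if Nat.sqrt m * Nat.sqrt m = m then (-1)^(Nat.sqrt m) else 0

lemma theta_split : theta = 1 + 2 * Tser := by
  ext m
  rw [map_add, two_mul, map_add, theta, Tser, PowerSeries.coeff_mk, PowerSeries.coeff_mk,
    PowerSeries.coeff_one]
  by_cases h0 : m = 0
  · subst h0; norm_num
  · rw [if_neg h0, if_neg h0, if_neg h0]
    split_ifs with h
    · ring
    · ring

lemma coeff_theta_4n3 (n : ℕ) : coeff (R := ℤ) (4*n+3) theta = 0 := by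
  rw [theta, PowerSeries.coeff_mk, if_neg (by omega), if_neg]
  rcases Nat.even_or_odd (Nat.sqrt (4*n+3)) with ⟨t, ht⟩ | ⟨t, ht⟩
  · have : (t+t)*(t+t) = 4*(t*t) := by ring
    rw [ht]
    omega
  · have : (2*t+1)*(2*t+1) = 4*(t*t+t)+1 := by ring
    rw [ht]
    omega

lemma four_eq_zero : (4 : PowerSeries (ZMod 4)) = 0 := by
  rw [← map_ofNat (PowerSeries.C (R := (ZMod 4))) 4, show (4 : ZMod 4) = 0 by decide, map_zero]

lemma zmod_half (x : ZMod 4) (hx : ZMod.castHom (show (2:ℕ) ∣ 4 by norm_num) (ZMod 2) x = 0) :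
    2 * (if x = 2 then (1:ZMod 4) else 0) = x := by
  revert hx
  revert x
  decide

lemma zmod_two_mul_eq_zero (x : ZMod 4) (hx : ZMod.castHom (show (2:ℕ) ∣ 4 by norm_num) (ZMod 2) x = 0) :
    2 * x = 0 := by
  revert hx
  revert x
  decide

end Part3

/-- `a : ℕ → ℕ` is the generalized overcubic partition function `ā_c`, i.e.
`(∑_{n≥0} ā_c(n) q^n) · f_1^2 · f_2^{2c} = f_2^3 · f_4^{c-1}` in `ℤ[[q]]`
(equivalently `∑_{n≥0} ā_c(n) q^n = f_4^{c-1}/(f_1^2 f_2^{2c-3})`). -/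
def IsGenOvercubic (c : ℕ) (a : ℕ → ℕ) : Prop :=
  (PowerSeries.mk fun n => (a n : ℤ)) * (fk 1) ^ 2 * (fk 2) ^ (2 * c) =
    (fk 2) ^ 3 * (fk 4) ^ (c - 1)

lemma fk2_const : constantCoeff (R := ℤ) (fk 2) = 1 := by
  rw [← PowerSeries.coeff_zero_eq_constantCoeff_apply, coeff_fk (k := 2) (N := 0) (by omega) (by omega),
    PP_zero]
  simp

theorem stmt_4 (i : ℕ) (hi : 1 ≤ i) (ab : ℕ → ℕ) (hab : IsGenOvercubic (2 * i) ab)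
    (n : ℕ) :
    ab (4 * n + 3) % 4 = 0 := by
  have hc : 1 ≤ 2*i := by omega
  set π₄ : ℤ →+* ZMod 4 := Int.castRingHom (ZMod 4) with hπ₄
  set π₂ : ℤ →+* ZMod 2 := Int.castRingHom (ZMod 2) with hπ₂
  set ρ : ZMod 4 →+* ZMod 2 := ZMod.castHom (show (2:ℕ) ∣ 4 by norm_num) (ZMod 2) with hρ
  have hcomp : ρ.comp π₄ = π₂ := RingHom.ext_int _ _
  set A' : PowerSeries (ZMod 4) :=
    PowerSeries.map π₄ (PowerSeries.mk fun m => ((ab m : ℤ))) with hA'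
  set g1 : PowerSeries (ZMod 4) := PowerSeries.map π₄ (fk 1) with hg1
  set g2 : PowerSeries (ZMod 4) := PowerSeries.map π₄ (fk 2) with hg2
  set g4 : PowerSeries (ZMod 4) := PowerSeries.map π₄ (fk 4) with hg4
  set θ₄ : PowerSeries (ZMod 4) := PowerSeries.map π₄ theta with hθ₄
  set T₄ : PowerSeries (ZMod 4) := PowerSeries.map π₄ Tser with hT₄
  -- the main relation mod 4
  have h1 : A' * g1^2 * g2^(2*(2*i)) = g2^3 * g4^(2*i-1) := by
    have := congrArg (PowerSeries.map π₄) hab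
    simpa only [map_mul, map_pow] using this
  -- Gauss identity mod 4
  have hg : g1^2 = g2 * θ₄ := by
    have := congrArg (PowerSeries.map π₄) gauss
    simpa only [map_mul, map_pow] using this
  have hsplit4 : θ₄ = 1 + 2 * T₄ := by
    have := congrArg (PowerSeries.map π₄) theta_split
    simpa only [map_add, map_mul, map_one, map_ofNat] using this
  have hθ2 : θ₄^2 = 1 := by
    rw [hsplit4]
    linear_combination (T₄ + T₄^2) * four_eq_zero
  have h2θ : 2*θ₄ = 2 := by
    rw [hsplit4]
    linear_combination T₄ * four_eq_zero
  -- the 2E decomposition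
  have hmap2 : PowerSeries.map π₂ (fk 4 ^ (2*i-1) - fk 2 ^ (2*(2*i-1))) = 0 := by
    rw [map_sub, map_pow, map_pow, ← frob2, ← pow_mul, sub_self]
  set E : PowerSeries (ZMod 4) := PowerSeries.mk fun m =>
    if coeff (R := (ZMod 4)) m (PowerSeries.map π₄ (fk 4 ^ (2*i-1) - fk 2 ^ (2*(2*i-1)))) = 2
    then (1 : ZMod 4) else 0 with hE
  have hE2 : 2 * E = PowerSeries.map π₄ (fk 4 ^ (2*i-1) - fk 2 ^ (2*(2*i-1))) := by
    ext m
    rw [two_mul, map_add, PowerSeries.coeff_mk]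
    rw [← two_mul]
    apply zmod_half
    rw [← PowerSeries.coeff_map, pmap_map, hcomp, hmap2, map_zero]
  have hEodd : Odd0 E := by
    intro m hm
    rw [PowerSeries.coeff_mk, if_neg]
    rw [PowerSeries.coeff_map]
    have hz : coeff (R := ℤ) m (fk 4 ^ (2*i-1) - fk 2 ^ (2*(2*i-1))) = 0 :=
      Odd0_sub (Odd0_pow Odd0_fk4 _) (Odd0_pow Odd0_fk2 _) m hm
    rw [hz, map_zero]
    decide
  have hsplit44 : g4^(2*i-1) = g2^(2*(2*i-1)) + 2*E := by
    have hmm : PowerSeries.map π₄ (fk 4 ^ (2*i-1) - fk 2 ^ (2*(2*i-1)))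
        = g4^(2*i-1) - g2^(2*(2*i-1)) := by
      rw [map_sub, map_pow, map_pow]
    rw [hmm] at hE2
    linear_combination -hE2
  have hexp : g2^3 * g2^(2*(2*i-1)) = g2^(2*(2*i)+1) := by
    rw [← pow_add]
    congr 1
    omega
  have hW1 : A' * g2^(2*(2*i)+1) * θ₄ = g2^(2*(2*i)+1) + 2*(g2^3*E) := by
    linear_combination h1 - (A' * g2^(2*(2*i))) * hg + g2^3 * hsplit44 + hexp
  have hW2 : A' * g2^(2*(2*i)+1) = θ₄ * g2^(2*(2*i)+1) + 2*(g2^3*E) := by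
    linear_combination θ₄ * hW1 - (A' * g2^(2*(2*i)+1)) * hθ2 + (g2^3*E) * h2θ
  -- invert W
  have hWconst : constantCoeff (R := (ZMod 4)) (g2^(2*(2*i)+1)) = 1 := by
    rw [map_pow]
    have : constantCoeff (R := (ZMod 4)) g2 = 1 := by
      rw [hg2, ← PowerSeries.coeff_zero_eq_constantCoeff_apply, PowerSeries.coeff_map,
        PowerSeries.coeff_zero_eq_constantCoeff_apply, fk2_const, map_one]
    rw [this, one_pow]
  set Winv : PowerSeries (ZMod 4) := PowerSeries.invOfUnit (g2^(2*(2*i)+1)) 1 with hWinvdef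
  have hWinv : g2^(2*(2*i)+1) * Winv = 1 :=
    PowerSeries.mul_invOfUnit _ 1 (by rw [hWconst]; rfl)
  have hfinal : A' = θ₄ + 2*(g2^3*E*Winv) := by
    have h3 : A' * (g2^(2*(2*i)+1) * Winv) = (θ₄ * g2^(2*(2*i)+1) + 2*(g2^3*E)) * Winv := by
      rw [← mul_assoc, hW2]
    rw [hWinv, mul_one] at h3
    rw [h3]
    have h4 : (θ₄ * g2^(2*(2*i)+1) + 2*(g2^3*E)) * Winv
        = θ₄ * (g2^(2*(2*i)+1) * Winv) + 2*(g2^3*E*Winv) := by ring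
    rw [h4, hWinv, mul_one]
  -- coefficient extraction
  have hcoeffθ : coeff (R := (ZMod 4)) (4*n+3) θ₄ = 0 := by
    rw [hθ₄, PowerSeries.coeff_map, coeff_theta_4n3, map_zero]
  have hOddg2 : Odd0 (PowerSeries.map ρ g2) := by
    rw [hg2, pmap_map, hcomp]
    exact Odd0_map π₂ Odd0_fk2
  have hcoeffZ : (2 : ZMod 4) * coeff (R := (ZMod 4)) (4*n+3) (g2^3*E*Winv) = 0 := by
    apply zmod_two_mul_eq_zero
    rw [← hρ, ← PowerSeries.coeff_map]
    have hodd : Odd0 (PowerSeries.map ρ (g2^3*E*Winv)) := by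
      rw [map_mul, map_mul, map_pow]
      apply Odd0_mul
      · exact Odd0_mul (Odd0_pow hOddg2 3) (Odd0_map ρ hEodd)
      · apply Odd0_inv (F := PowerSeries.map ρ (g2^(2*(2*i)+1)))
        · rw [map_pow]
          exact Odd0_pow hOddg2 _
        · rw [← map_mul, hWinv, map_one]
    exact hodd (4*n+3) (by omega)
  have hAco : coeff (R := (ZMod 4)) (4*n+3) A' = ((ab (4*n+3) : ℕ) : ZMod 4) := by
    rw [hA', PowerSeries.coeff_map, PowerSeries.coeff_mk]
    simp
  have hzero : ((ab (4*n+3) : ℕ) : ZMod 4) = 0 := by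
    rw [← hAco, hfinal, map_add, hcoeffθ, zero_add]
    have : coeff (R := (ZMod 4)) (4*n+3) (2*(g2^3*E*Winv))
        = 2 * coeff (R := (ZMod 4)) (4*n+3) (g2^3*E*Winv) := by
      rw [two_mul, map_add, two_mul]
    rw [this, hcoeffZ]
  rw [ZMod.natCast_eq_zero_iff] at hzero
  omega
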